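/- arXiv:2501.10700 — 2 statements merged into one kernel-verified Lean document; each statement's English description precedes it below -/
import Mathlib

section
/- For m, m' ≥ 2 and base code RM(1,m') (i.e., r' = 1), the recursively defined code D(2,m) equals the span of { mon_S : S ⊆ Fin (m·m'), |S| ≤ 2, and |S ∩ B_i| ≤ 1 for every i ∈ {1,…,m} }. -/
/-- Length-`(2^m')^μ` vectors, viewed as functions on `μ` blocks of `m'` binary variables. -/
abbrev Vsp (m' μ : ℕ) := (Fin μ → (Fin m' → ZMod 2)) → ZMod 2

/-- The Reed–Muller code `RM(r', m')` : span of monomials of degree at most `r'`. -/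
def RMbase (r' m' : ℕ) : Submodule (ZMod 2) ((Fin m' → ZMod 2) → ZMod 2) :=
  Submodule.span (ZMod 2)
    {c | ∃ S : Finset (Fin m'), S.card ≤ r' ∧ c = fun x => ∏ i ∈ S, x i}

/-- `(c ⊙ v)(x₁,…,x_μ,x_{μ+1}) = c(x₁,…,x_μ) · v(x_{μ+1})`. -/
def odot {m' μ : ℕ} (c : Vsp m' μ) (v : (Fin m' → ZMod 2) → ZMod 2) : Vsp m' (μ + 1) :=
  fun x => c (fun i => x i.castSucc) * v (x (Fin.last μ))

/-- The recursive subproduct code `D(r, μ)` with base code `RM(r', m')`. -/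
def Dcode (r' m' : ℕ) : ℕ → (μ : ℕ) → Submodule (ZMod 2) (Vsp m' μ)
  | _, 0 => Submodule.span (ZMod 2) {c : Vsp m' 0 | c = fun _ => 1}
  | 0, μ + 1 => Submodule.span (ZMod 2) {c : Vsp m' (μ + 1) | c = fun _ => 1}
  | _ + 1, 1 => Submodule.span (ZMod 2)
      {c : Vsp m' 1 | ∃ S : Finset (Fin m'), S.card ≤ r' ∧ c = fun x => ∏ i ∈ S, x 0 i}
  | r + 1, μ + 2 =>
    if r + 1 < μ + 2 then
      Submodule.span (ZMod 2)
        ({w | ∃ c ∈ Dcode r' m' (r + 1) (μ + 1), w = odot c (fun _ => 1)} ∪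
         {w | ∃ c ∈ Dcode r' m' r (μ + 1), ∃ v ∈ RMbase r' m', w = odot c v})
    else
      Submodule.span (ZMod 2)
        {w | ∃ c ∈ Dcode r' m' (μ + 1) (μ + 1), ∃ v ∈ RMbase r' m', w = odot c v}
  termination_by r μ => μ

/-- Monomial evaluation `mon_{S₁ ∪ ⋯ ∪ S_μ}` on the block-structured space;
a subset `S ⊆ Fin (μ·m')` is identified with a subset of `Fin μ × Fin m'`,
the first coordinate being the block index. -/
def monP {m' μ : ℕ} (S : Finset (Fin μ × Fin m')) : Vsp m' μ :=
  fun x => ∏ p ∈ S, x p.1 p.2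

section Aux

variable {m' μ : ℕ}

/-- Embedding of a block-pair into the extended index set (non-last blocks). -/
def embC {m' μ : ℕ} (p : Fin μ × Fin m') : Fin (μ + 1) × Fin m' := (p.1.castSucc, p.2)

/-- Embedding of the last block. -/
def embL {m' μ : ℕ} (j : Fin m') : Fin (μ + 1) × Fin m' := (Fin.last μ, j)

lemma embC_inj : Function.Injective (embC (m' := m') (μ := μ)) := by
  intro p q h
  simp only [embC, Prod.mk.injEq] at h
  exact Prod.ext (Fin.castSucc_injective _ h.1) h.2

lemma embL_inj : Function.Injective (embL (m' := m') (μ := μ)) := by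
  intro p q h
  simpa [embL] using h

lemma disj_embC_embL (S : Finset (Fin μ × Fin m')) (T : Finset (Fin m')) :
    Disjoint (S.image embC) (T.image embL) := by
  simp only [Finset.disjoint_left, Finset.mem_image]
  rintro a ⟨p, _, rfl⟩ ⟨j, _, hj⟩
  have := congrArg Prod.fst hj
  simp only [embC, embL] at this
  exact absurd this.symm (Fin.castSucc_lt_last p.1).ne

lemma odot_monP (S : Finset (Fin μ × Fin m')) (T : Finset (Fin m')) :
    odot (monP S) (fun y => ∏ i ∈ T, y i) = monP (S.image embC ∪ T.image embL) := by
  funext x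
  rw [monP, Finset.prod_union (disj_embC_embL S T),
    Finset.prod_image (fun a _ b _ h => embC_inj h),
    Finset.prod_image (fun a _ b _ h => embL_inj h)]
  rfl

lemma monP_empty : (monP (∅ : Finset (Fin μ × Fin m'))) = fun _ => 1 := by
  funext x; simp [monP]

lemma one_eq_prod_empty : (fun _ => 1 : (Fin m' → ZMod 2) → ZMod 2)
    = fun y => ∏ i ∈ (∅ : Finset (Fin m')), y i := by
  funext y; simp

/- algebraic lemmas for odot -/
lemma odot_add_left (c c' : Vsp m' μ) (v) : odot (c + c') v = odot c v + odot c' v := by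
  funext x; simp [odot, add_mul]

lemma odot_smul_left (a : ZMod 2) (c : Vsp m' μ) (v) : odot (a • c) v = a • odot c v := by
  funext x; simp [odot, smul_eq_mul, mul_assoc]

lemma odot_zero_left (v) : odot (0 : Vsp m' μ) v = 0 := by
  funext x; simp [odot]

lemma odot_add_right (c : Vsp m' μ) (v w) : odot c (v + w) = odot c v + odot c w := by
  funext x; simp [odot, mul_add]

lemma odot_smul_right (a : ZMod 2) (c : Vsp m' μ) (v) : odot c (a • v) = a • odot c v := by
  funext x; simp [odot, smul_eq_mul]; ring

lemma odot_zero_right (c : Vsp m' μ) : odot c (0 : (Fin m' → ZMod 2) → ZMod 2) = 0 := by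
  funext x; simp [odot]

lemma odot_mem_span_left {A : Set (Vsp m' μ)} {c : Vsp m' μ} (v)
    (hc : c ∈ Submodule.span (ZMod 2) A) :
    odot c v ∈ Submodule.span (ZMod 2) {w | ∃ a ∈ A, w = odot a v} := by
  induction hc using Submodule.span_induction with
  | mem a ha => exact Submodule.subset_span ⟨a, ha, rfl⟩
  | zero => rw [odot_zero_left]; exact zero_mem _
  | add c c' _ _ h1 h2 => rw [odot_add_left]; exact add_mem h1 h2
  | smul r c _ h => rw [odot_smul_left]; exact Submodule.smul_mem _ _ h

lemma odot_mem_span {A : Set (Vsp m' μ)} {B : Set ((Fin m' → ZMod 2) → ZMod 2)}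
    {c : Vsp m' μ} {v : (Fin m' → ZMod 2) → ZMod 2}
    (hc : c ∈ Submodule.span (ZMod 2) A) (hv : v ∈ Submodule.span (ZMod 2) B) :
    odot c v ∈ Submodule.span (ZMod 2) {w | ∃ a ∈ A, ∃ b ∈ B, w = odot a b} := by
  induction hc using Submodule.span_induction with
  | mem a ha =>
      induction hv using Submodule.span_induction with
      | mem b hb => exact Submodule.subset_span ⟨a, ha, b, hb, rfl⟩
      | zero => rw [odot_zero_right]; exact zero_mem _
      | add v w _ _ h1 h2 => rw [odot_add_right]; exact add_mem h1 h2
      | smul r v _ h => rw [odot_smul_right]; exact Submodule.smul_mem _ _ h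
  | zero => rw [odot_zero_left]; exact zero_mem _
  | add c c' _ _ h1 h2 => rw [odot_add_left]; exact add_mem h1 h2
  | smul r c _ h => rw [odot_smul_left]; exact Submodule.smul_mem _ _ h

/- counting lemmas for unions of embedded sets -/
lemma card_union_emb (S : Finset (Fin μ × Fin m')) (T : Finset (Fin m')) :
    (S.image embC ∪ T.image embL).card = S.card + T.card := by
  rw [Finset.card_union_of_disjoint (disj_embC_embL S T),
    Finset.card_image_of_injective _ embC_inj, Finset.card_image_of_injective _ embL_inj]

lemma filter_union_emb_castSucc (S : Finset (Fin μ × Fin m')) (T : Finset (Fin m'))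
    (i : Fin μ) :
    ((S.image embC ∪ T.image embL).filter fun p => p.1 = i.castSucc).card
      = (S.filter fun p => p.1 = i).card := by
  have : (S.image embC ∪ T.image embL).filter (fun p => p.1 = i.castSucc)
      = (S.filter fun p => p.1 = i).image embC := by
    ext q
    simp only [Finset.mem_filter, Finset.mem_union, Finset.mem_image, embC, embL]
    constructor
    · rintro ⟨⟨p, hp, rfl⟩ | ⟨j, hj, rfl⟩, h1⟩
      · exact ⟨p, ⟨hp, Fin.castSucc_injective _ h1⟩, rfl⟩
      · simp only at h1
        exact absurd h1.symm (Fin.castSucc_lt_last i).ne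
    · rintro ⟨p, ⟨hp, hpi⟩, rfl⟩
      exact ⟨Or.inl ⟨p, hp, rfl⟩, by simp [hpi]⟩
  rw [this, Finset.card_image_of_injective _ embC_inj]

lemma filter_union_emb_last (S : Finset (Fin μ × Fin m')) (T : Finset (Fin m')) :
    ((S.image embC ∪ T.image embL).filter fun p => p.1 = Fin.last μ).card = T.card := by
  have : (S.image embC ∪ T.image embL).filter (fun p => p.1 = Fin.last μ)
      = T.image embL := by
    ext q
    simp only [Finset.mem_filter, Finset.mem_union, Finset.mem_image, embC, embL]
    constructor
    · rintro ⟨⟨p, hp, rfl⟩ | h, h1⟩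
      · exact absurd h1 (Fin.castSucc_lt_last p.1).ne
      · exact h
    · rintro ⟨j, hj, rfl⟩
      exact ⟨Or.inr ⟨j, hj, rfl⟩, rfl⟩
  rw [this, Finset.card_image_of_injective _ embL_inj]

/-- Decomposition of a subset of the extended index set. -/
lemma decomp (S : Finset (Fin (μ + 1) × Fin m')) :
    ∃ (S' : Finset (Fin μ × Fin m')) (T : Finset (Fin m')),
      S = S'.image embC ∪ T.image embL ∧
      S'.card + T.card = S.card ∧
      (∀ i : Fin μ, (S'.filter fun p => p.1 = i).card
        = (S.filter fun p => p.1 = i.castSucc).card) ∧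
      T.card = (S.filter fun p => p.1 = Fin.last μ).card := by
  classical
  refine ⟨S.preimage embC (embC_inj.injOn),
    (S.filter fun p => p.1 = Fin.last μ).image Prod.snd, ?_, ?_, ?_, ?_⟩
  · ext q
    obtain ⟨i, j⟩ := q
    simp only [Finset.mem_union, Finset.mem_image, Finset.mem_preimage, Finset.mem_filter,
      embC, embL, Prod.mk.injEq]
    rcases Fin.eq_castSucc_or_eq_last i with ⟨i', rfl⟩ | rfl
    · constructor
      · intro hmem
        exact Or.inl ⟨(i', j), hmem, rfl, rfl⟩
      · rintro (⟨p, hp, hp1, rfl⟩ | ⟨j', _, hj1, _⟩)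
        · rwa [show p.1 = i' from Fin.castSucc_injective _ hp1] at hp
        · exact absurd hj1.symm (Fin.castSucc_lt_last i').ne
    · constructor
      · intro hmem
        exact Or.inr ⟨j, ⟨(Fin.last μ, j), ⟨hmem, rfl⟩, rfl⟩, rfl, rfl⟩
      · rintro (⟨p, _, hp1, _⟩ | ⟨j', ⟨p, ⟨hp, hp1⟩, hp2⟩, _, rfl⟩)
        · exact absurd hp1 (Fin.castSucc_lt_last p.1).ne
        · have : p = (Fin.last μ, j') := Prod.ext hp1 hp2
          rwa [this] at hp
  · have h1 : (S.preimage embC embC_inj.injOn).card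
        = (S.filter fun p => ¬ p.1 = Fin.last μ).card := by
      rw [← Finset.card_image_of_injective _ (embC_inj (m' := m') (μ := μ))]
      congr 1
      ext q
      simp only [Finset.mem_image, Finset.mem_preimage, Finset.mem_filter]
      constructor
      · rintro ⟨p, hp, rfl⟩
        exact ⟨hp, (Fin.castSucc_lt_last p.1).ne⟩
      · rintro ⟨hq, hq1⟩
        obtain ⟨i', hi'⟩ := Fin.eq_castSucc_of_ne_last hq1
        exact ⟨(i', q.2), by rwa [show embC (i', q.2) = q from Prod.ext hi' rfl], 
          Prod.ext hi' rfl⟩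
    have h2 : ((S.filter fun p => p.1 = Fin.last μ).image Prod.snd).card
        = (S.filter fun p => p.1 = Fin.last μ).card := by
      apply Finset.card_image_of_injOn
      intro p hp q hq h
      simp only [Finset.mem_coe, Finset.mem_filter] at hp hq
      exact Prod.ext (hp.2.trans hq.2.symm) h
    have h3 := Finset.card_filter_add_card_filter_not
      (s := S) (p := fun p => p.1 = Fin.last μ)
    omega
  · intro i
    have himg : (((S.preimage embC embC_inj.injOn).filter fun p => p.1 = i).image embC)
        = S.filter fun p => p.1 = i.castSucc := by
      ext q
      simp only [Finset.mem_image, Finset.mem_preimage, Finset.mem_filter]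
      constructor
      · rintro ⟨p, ⟨hp, rfl⟩, rfl⟩
        exact ⟨hp, rfl⟩
      · rintro ⟨hq, hq1⟩
        exact ⟨(i, q.2), ⟨by rwa [show embC (i, q.2) = q from Prod.ext hq1.symm rfl], rfl⟩,
          Prod.ext hq1.symm rfl⟩
    rw [← himg, Finset.card_image_of_injective _ embC_inj]
  · rw [Finset.card_image_of_injOn]
    intro p hp q hq h
    simp only [Finset.mem_coe, Finset.mem_filter] at hp hq
    exact Prod.ext (hp.2.trans hq.2.symm) h

end Aux

lemma Dcode_one_one (m' : ℕ) : Dcode 1 m' 1 1 = Submodule.span (ZMod 2)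
    {c : Vsp m' 1 | ∃ S : Finset (Fin m'), S.card ≤ 1 ∧ c = fun x => ∏ i ∈ S, x 0 i} := by
  rw [Dcode]

lemma Dcode_zero (m' μ : ℕ) : Dcode 1 m' 0 (μ + 1) = Submodule.span (ZMod 2)
    {c : Vsp m' (μ + 1) | c = fun _ => 1} := by
  rw [Dcode]

lemma Dcode_one_succ (m' μ : ℕ) : Dcode 1 m' 1 (μ + 2) = Submodule.span (ZMod 2)
    ({w | ∃ c ∈ Dcode 1 m' 1 (μ + 1), w = odot c (fun _ => 1)} ∪
     {w | ∃ c ∈ Dcode 1 m' 0 (μ + 1), ∃ v ∈ RMbase 1 m', w = odot c v}) := by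
  conv_lhs => rw [Dcode]
  rw [if_pos (by omega)]

lemma Dcode_two_two (m' : ℕ) : Dcode 1 m' 2 2 = Submodule.span (ZMod 2)
    {w | ∃ c ∈ Dcode 1 m' 1 1, ∃ v ∈ RMbase 1 m', w = odot c v} := by
  conv_lhs => rw [Dcode]
  rw [if_neg (by omega)]

lemma Dcode_two_succ (m' μ : ℕ) : Dcode 1 m' 2 (μ + 3) = Submodule.span (ZMod 2)
    ({w | ∃ c ∈ Dcode 1 m' 2 (μ + 2), w = odot c (fun _ => 1)} ∪
     {w | ∃ c ∈ Dcode 1 m' 1 (μ + 2), ∃ v ∈ RMbase 1 m', w = odot c v}) := by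
  conv_lhs => rw [Dcode]
  rw [if_pos (by omega)]

/-- Monomials of degree at most 1. -/
def M1 (m' μ : ℕ) : Set (Vsp m' μ) :=
  {c | ∃ S : Finset (Fin μ × Fin m'), S.card ≤ 1 ∧ c = monP S}

/-- Monomials of degree at most 2 with at most one variable per block. -/
def M2 (m' μ : ℕ) : Set (Vsp m' μ) :=
  {c | ∃ S : Finset (Fin μ × Fin m'), S.card ≤ 2 ∧
    (∀ i : Fin μ, (S.filter fun p => p.1 = i).card ≤ 1) ∧ c = monP S}

lemma span_fin1 (m' : ℕ) : Submodule.span (ZMod 2)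
    {c : Vsp m' 1 | ∃ S : Finset (Fin m'), S.card ≤ 1 ∧ c = fun x => ∏ i ∈ S, x 0 i}
    = Submodule.span (ZMod 2) (M1 m' 1) := by
  apply le_antisymm <;> rw [Submodule.span_le] <;> rintro c ⟨S, hS, rfl⟩ <;>
    apply Submodule.subset_span
  · refine ⟨S.image (fun j => ((0 : Fin 1), j)), Finset.card_image_le.trans hS, ?_⟩
    funext x
    rw [monP, Finset.prod_image (fun a _ b _ h => by
      simpa using congrArg Prod.snd h)]
  · refine ⟨S.image Prod.snd, Finset.card_image_le.trans hS, ?_⟩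
    funext x
    rw [Finset.prod_image (fun a ha b hb h =>
      Prod.ext ((Fin.eq_zero a.1).trans (Fin.eq_zero b.1).symm) h), monP]
    exact Finset.prod_congr rfl fun p _ => by rw [Fin.eq_zero p.1]

lemma D1_eq (m' μ : ℕ) :
    Dcode 1 m' 1 (μ + 1) = Submodule.span (ZMod 2) (M1 m' (μ + 1)) := by
  induction μ with
  | zero => rw [Dcode_one_one]; exact span_fin1 m'
  | succ ν ih =>
    rw [Dcode_one_succ]
    apply le_antisymm
    · rw [Submodule.span_le]
      rintro w (⟨c, hc, rfl⟩ | ⟨c, hc, v, hv, rfl⟩)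
      · rw [ih] at hc
        refine Submodule.span_le.mpr ?_ (odot_mem_span_left (fun _ => 1) hc)
        rintro w ⟨a, ⟨S, hS, rfl⟩, rfl⟩
        apply Submodule.subset_span
        refine ⟨S.image embC, by
          rwa [Finset.card_image_of_injective _ embC_inj], ?_⟩
        rw [one_eq_prod_empty (m' := m'), odot_monP]
        simp
      · rw [Dcode_zero] at hc
        have hv' : v ∈ Submodule.span (ZMod 2)
            {c : (Fin m' → ZMod 2) → ZMod 2 |
              ∃ S : Finset (Fin m'), S.card ≤ 1 ∧ c = fun x => ∏ i ∈ S, x i} := hv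
        refine Submodule.span_le.mpr ?_ (odot_mem_span hc hv')
        rintro w ⟨a, ha, b, ⟨T, hT, rfl⟩, rfl⟩
        rw [Set.mem_setOf_eq] at ha
        subst ha
        apply Submodule.subset_span
        refine ⟨(∅ : Finset (Fin (ν + 1) × Fin m')).image embC ∪ T.image embL, ?_, ?_⟩
        · rw [card_union_emb]; simpa using hT
        · rw [← odot_monP, monP_empty]
    · rw [Submodule.span_le]
      rintro c ⟨S, hS, rfl⟩
      obtain ⟨S', T, hSeq, hcard, hblock, hT⟩ := decomp S
      have hodot : monP S = odot (monP S') (fun y => ∏ i ∈ T, y i) := by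
        rw [odot_monP, ← hSeq]
      rcases T.eq_empty_or_nonempty with rfl | hTne
      · apply Submodule.subset_span
        left
        refine ⟨monP S', ?_, ?_⟩
        · rw [ih]
          exact Submodule.subset_span ⟨S', by omega, rfl⟩
        · rw [one_eq_prod_empty (m' := m'), hodot]
      · apply Submodule.subset_span
        right
        have hS'0 : S' = ∅ := by
          have := hTne.card_pos
          exact Finset.card_eq_zero.mp (by omega)
        refine ⟨monP S', ?_, fun y => ∏ i ∈ T, y i, ?_, hodot⟩
        · rw [Dcode_zero]
          exact Submodule.subset_span (by rw [hS'0, monP_empty]; exact rfl)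
        · have := hTne.card_pos
          exact Submodule.subset_span ⟨T, by omega, rfl⟩

lemma D2_eq (m' μ : ℕ) :
    Dcode 1 m' 2 (μ + 2) = Submodule.span (ZMod 2) (M2 m' (μ + 2)) := by
  induction μ with
  | zero =>
    rw [Dcode_two_two]
    apply le_antisymm
    · rw [Submodule.span_le]
      rintro w ⟨c, hc, v, hv, rfl⟩
      rw [Dcode_one_one, span_fin1] at hc
      have hv' : v ∈ Submodule.span (ZMod 2)
          {c : (Fin m' → ZMod 2) → ZMod 2 |
            ∃ S : Finset (Fin m'), S.card ≤ 1 ∧ c = fun x => ∏ i ∈ S, x i} := hv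
      refine Submodule.span_le.mpr ?_ (odot_mem_span hc hv')
      rintro w ⟨a, ⟨S, hS, rfl⟩, b, ⟨T, hT, rfl⟩, rfl⟩
      apply Submodule.subset_span
      refine ⟨S.image embC ∪ T.image embL, ?_, ?_, odot_monP S T⟩
      · rw [card_union_emb]; omega
      · intro i
        rcases Fin.eq_castSucc_or_eq_last i with ⟨j, rfl⟩ | rfl
        · rw [filter_union_emb_castSucc]
          exact (Finset.card_filter_le _ _).trans hS
        · rw [filter_union_emb_last]; exact hT
    · rw [Submodule.span_le]
      rintro c ⟨S, hS2, hblk, rfl⟩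
      obtain ⟨S', T, hSeq, hcard, hblock, hT⟩ := decomp S
      have hodot : monP S = odot (monP S') (fun y => ∏ i ∈ T, y i) := by
        rw [odot_monP, ← hSeq]
      apply Submodule.subset_span
      refine ⟨monP S', ?_, fun y => ∏ i ∈ T, y i, ?_, hodot⟩
      · rw [Dcode_one_one, span_fin1]
        apply Submodule.subset_span
        refine ⟨S', ?_, rfl⟩
        have h0 : S'.filter (fun p => p.1 = (0 : Fin 1)) = S' :=
          Finset.filter_true_of_mem fun p _ => Fin.eq_zero p.1
        have := hblock 0
        rw [h0] at this
        rw [this]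
        exact hblk _
      · apply Submodule.subset_span
        refine ⟨T, ?_, rfl⟩
        rw [hT]
        exact hblk _
  | succ ν ih =>
    rw [Dcode_two_succ]
    apply le_antisymm
    · rw [Submodule.span_le]
      rintro w (⟨c, hc, rfl⟩ | ⟨c, hc, v, hv, rfl⟩)
      · rw [ih] at hc
        refine Submodule.span_le.mpr ?_ (odot_mem_span_left (fun _ => 1) hc)
        rintro w ⟨a, ⟨S, hS2, hblk, rfl⟩, rfl⟩
        apply Submodule.subset_span
        refine ⟨S.image embC ∪ (∅ : Finset (Fin m')).image embL, ?_, ?_, ?_⟩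
        · rw [card_union_emb]; simpa using hS2
        · intro i
          rcases Fin.eq_castSucc_or_eq_last i with ⟨j, rfl⟩ | rfl
          · rw [filter_union_emb_castSucc]; exact hblk j
          · rw [filter_union_emb_last]; simp
        · rw [one_eq_prod_empty (m' := m'), odot_monP]
      · rw [D1_eq] at hc
        have hv' : v ∈ Submodule.span (ZMod 2)
            {c : (Fin m' → ZMod 2) → ZMod 2 |
              ∃ S : Finset (Fin m'), S.card ≤ 1 ∧ c = fun x => ∏ i ∈ S, x i} := hv
        refine Submodule.span_le.mpr ?_ (odot_mem_span hc hv')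
        rintro w ⟨a, ⟨S, hS, rfl⟩, b, ⟨T, hT, rfl⟩, rfl⟩
        apply Submodule.subset_span
        refine ⟨S.image embC ∪ T.image embL, ?_, ?_, odot_monP S T⟩
        · rw [card_union_emb]; omega
        · intro i
          rcases Fin.eq_castSucc_or_eq_last i with ⟨j, rfl⟩ | rfl
          · rw [filter_union_emb_castSucc]
            exact (Finset.card_filter_le _ _).trans hS
          · rw [filter_union_emb_last]; exact hT
    · rw [Submodule.span_le]
      rintro c ⟨S, hS2, hblk, rfl⟩
      obtain ⟨S', T, hSeq, hcard, hblock, hT⟩ := decomp S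
      have hodot : monP S = odot (monP S') (fun y => ∏ i ∈ T, y i) := by
        rw [odot_monP, ← hSeq]
      have hTcard : T.card ≤ 1 := by rw [hT]; exact hblk _
      rcases T.eq_empty_or_nonempty with rfl | hTne
      · apply Submodule.subset_span
        left
        refine ⟨monP S', ?_, ?_⟩
        · rw [ih]
          refine Submodule.subset_span ⟨S', by omega, fun i => ?_, rfl⟩
          rw [hblock i]
          exact hblk _
        · rw [one_eq_prod_empty (m' := m'), hodot]
      · apply Submodule.subset_span
        right
        refine ⟨monP S', ?_, fun y => ∏ i ∈ T, y i, ?_, hodot⟩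
        · rw [D1_eq]
          have := hTne.card_pos
          exact Submodule.subset_span ⟨S', by omega, rfl⟩
        · exact Submodule.subset_span ⟨T, hTcard, rfl⟩

theorem stmt_2 (m m' : ℕ) (hm : 2 ≤ m) (hm' : 2 ≤ m') :
    Dcode 1 m' 2 m = Submodule.span (ZMod 2)
      {c : Vsp m' m | ∃ S : Finset (Fin m × Fin m'),
        S.card ≤ 2 ∧ (∀ i : Fin m, (S.filter fun p => p.1 = i).card ≤ 1) ∧ c = monP S} := by
  obtain ⟨μ, rfl⟩ : ∃ μ, m = μ + 2 := ⟨m - 2, by omega⟩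
  exact D2_eq m' μ
end

section
/- For every 0 ≤ r ≤ m, the ZMod 2-dimension of the recursive subproduct code D(r,m) with base code RM(r',m') equals Σ_{i=0}^{r} (m choose i) · k̄^i, where k̄ = Σ_{j=1}^{r'} (m' choose j) (that is, k̄ = dim RM(r',m') − 1). -/
/-- Product monomial indexed by a family of subsets, one per block. -/
def monF {m' μ : ℕ} (f : Fin μ → Finset (Fin m')) : Vsp m' μ :=
  fun x => ∏ b, ∏ i ∈ f b, x b i

lemma monF_eval {m' μ : ℕ} (f h : Fin μ → Finset (Fin m')) :
    monF f (fun b i => if i ∈ h b then 1 else 0) = if (∀ b, f b ⊆ h b) then 1 else 0 := by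
  unfold monF
  have hb : ∀ b, (∏ i ∈ f b, (if i ∈ h b then (1:ZMod 2) else 0)) =
      if f b ⊆ h b then 1 else 0 := by
    intro b
    by_cases hsub : f b ⊆ h b
    · rw [if_pos hsub]
      exact Finset.prod_eq_one (fun i hi => if_pos (hsub hi))
    · rw [if_neg hsub]
      obtain ⟨i, hi, hni⟩ := Finset.not_subset.mp hsub
      exact Finset.prod_eq_zero hi (if_neg hni)
  simp only [hb]
  by_cases hall : ∀ b, f b ⊆ h b
  · rw [if_pos hall]; exact Finset.prod_eq_one (fun b _ => if_pos (hall b))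
  · rw [if_neg hall]
    push_neg at hall
    obtain ⟨b, hbns⟩ := hall
    exact Finset.prod_eq_zero (Finset.mem_univ b) (if_neg hbns)

lemma monF_linearIndependent {m' μ : ℕ} :
    LinearIndependent (ZMod 2) (monF (m' := m') (μ := μ)) := by
  rw [Fintype.linearIndependent_iff]
  intro g hg
  -- for each h : sum over f ≤ h of g f = 0
  have key : ∀ h : Fin μ → Finset (Fin m'),
      ∑ f ∈ Finset.univ.filter (fun f => ∀ b, f b ⊆ h b), g f = 0 := by
    intro h
    have := congrFun hg (fun b i => if i ∈ h b then 1 else 0)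
    simp only [Finset.sum_apply, Pi.smul_apply, smul_eq_mul, Pi.zero_apply] at this
    rw [← this]
    rw [Finset.sum_filter]
    apply Finset.sum_congr rfl
    intro f _
    rw [monF_eval]
    by_cases hf : ∀ b, f b ⊆ h b
    · simp [hf]
    · simp [hf]
  -- strong induction on total weight
  have main : ∀ n : ℕ, ∀ h : Fin μ → Finset (Fin m'), (∑ b, (h b).card) < n → g h = 0 := by
    intro n
    induction n with
    | zero => intro h hlt; omega
    | succ n ih =>
      intro h hlt
      have hk := key h
      have hmem : h ∈ Finset.univ.filter (fun f => ∀ b, f b ⊆ h b) := by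
        simp
      rw [← Finset.add_sum_erase _ _ hmem] at hk
      have hrest : ∑ f ∈ (Finset.univ.filter (fun f => ∀ b, f b ⊆ h b)).erase h, g f = 0 := by
        apply Finset.sum_eq_zero
        intro f hf
        rw [Finset.mem_erase, Finset.mem_filter] at hf
        obtain ⟨hne, _, hsub⟩ := hf
        apply ih
        have hlt2 : (∑ b, (f b).card) < ∑ b, (h b).card := by
          apply Finset.sum_lt_sum
          · exact fun b _ => Finset.card_le_card (hsub b)
          · have : ∃ b, f b ≠ h b := by
              by_contra hc; push_neg at hc; exact hne (funext hc)
            obtain ⟨b, hb⟩ := this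
            exact ⟨b, Finset.mem_univ b, Finset.card_lt_card (ssubset_of_subset_of_ne (hsub b) hb)⟩
        omega
      rw [hrest, add_zero] at hk
      exact hk
  intro h
  exact main (∑ b, (h b).card + 1) h (Nat.lt_succ_self _)

/-- allowed families: at most `r` nonempty blocks, each of size at most `r'`. -/
def allowedFS (r' : ℕ) (m' : ℕ) (r μ : ℕ) : Finset (Fin μ → Finset (Fin m')) :=
  Finset.univ.filter fun f =>
    (Finset.univ.filter fun b => f b ≠ ∅).card ≤ r ∧ ∀ b, (f b).card ≤ r'

lemma card_allowedFS (r' m' r μ : ℕ) :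
    (allowedFS r' m' r μ).card =
      ∑ i ∈ Finset.range (r + 1), μ.choose i * (∑ j ∈ Finset.Icc 1 r', m'.choose j) ^ i := by
  classical
  set k : ℕ := ∑ j ∈ Finset.Icc 1 r', m'.choose j with hk
  set N : Finset (Finset (Fin m')) := Finset.univ.filter fun T => T ≠ ∅ ∧ T.card ≤ r' with hN
  have hNcard : N.card = k := by
    have : N = (Finset.Icc 1 r').biUnion fun j => Finset.powersetCard j Finset.univ := by
      ext T
      simp only [hN, Finset.mem_filter, Finset.mem_univ, true_and, Finset.mem_biUnion,
        Finset.mem_Icc, Finset.mem_powersetCard_univ]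
      constructor
      · rintro ⟨hne, hle⟩
        exact ⟨T.card, ⟨Finset.card_pos.mpr (Finset.nonempty_of_ne_empty hne), hle⟩, rfl⟩
      · rintro ⟨j, ⟨h1, h2⟩, rfl⟩
        exact ⟨fun he => by simp [he] at h1, h2⟩
    rw [this, Finset.card_biUnion]
    · simp [Finset.card_powersetCard, hk, Finset.card_univ]
    · intro x _ y _ hxy
      apply Finset.disjoint_left.mpr
      intro T hx hy
      rw [Finset.mem_powersetCard_univ] at hx hy
      exact hxy (hx ▸ hy)
  have h1 : (allowedFS r' m' r μ).card =
      ∑ B ∈ Finset.univ.filter (fun B : Finset (Fin μ) => B.card ≤ r), ((allowedFS r' m' r μ).filter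
        (fun f => (Finset.univ.filter fun b => f b ≠ ∅) = B)).card := by
    apply Finset.card_eq_sum_card_fiberwise
    intro f hf
    simp only [allowedFS, Finset.mem_coe, Finset.mem_filter, Finset.mem_univ, true_and] at hf
    simp [hf.1]
  have h2 : ∀ B ∈ Finset.univ.filter (fun B : Finset (Fin μ) => B.card ≤ r), ((allowedFS r' m' r μ).filter
        (fun f => (Finset.univ.filter fun b => f b ≠ ∅) = B)).card = k ^ B.card := by
    intro B hB
    rw [Finset.mem_filter] at hB
    have hfib : (allowedFS r' m' r μ).filter
        (fun f => (Finset.univ.filter fun b => f b ≠ ∅) = B) =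
        Fintype.piFinset (fun b => if b ∈ B then N else {∅}) := by
      ext f
      simp only [allowedFS, Finset.mem_filter, Finset.mem_univ, true_and, Fintype.mem_piFinset]
      constructor
      · rintro ⟨⟨_, hcard⟩, hsupp⟩
        intro b
        by_cases hb : b ∈ B
        · rw [if_pos hb]
          rw [← hsupp] at hb
          simp only [Finset.mem_filter, Finset.mem_univ, true_and] at hb
          simp only [hN, Finset.mem_filter, Finset.mem_univ, true_and]
          exact ⟨hb, hcard b⟩
        · rw [if_neg hb]
          rw [← hsupp] at hb
          simp only [Finset.mem_filter, Finset.mem_univ, true_and, not_not] at hb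
          simp [hb]
      · intro hpi
        have hsupp : (Finset.univ.filter fun b => f b ≠ ∅) = B := by
          ext b
          simp only [Finset.mem_filter, Finset.mem_univ, true_and]
          have := hpi b
          by_cases hb : b ∈ B
          · rw [if_pos hb] at this
            simp only [hN, Finset.mem_filter, Finset.mem_univ, true_and] at this
            exact ⟨fun _ => hb, fun _ => this.1⟩
          · rw [if_neg hb, Finset.mem_singleton] at this
            exact ⟨fun hne => absurd this hne, fun h => absurd h hb⟩
        refine ⟨⟨by rw [hsupp]; exact hB.2, ?_⟩, hsupp⟩
        intro b
        have := hpi b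
        by_cases hb : b ∈ B
        · rw [if_pos hb] at this
          simp only [hN, Finset.mem_filter, Finset.mem_univ, true_and] at this
          exact this.2
        · rw [if_neg hb, Finset.mem_singleton] at this
          simp [this]
    rw [hfib, Fintype.card_piFinset]
    have : ∀ b : Fin μ, (if b ∈ B then N else {∅}).card = if b ∈ B then k else 1 := by
      intro b; by_cases hb : b ∈ B <;> simp [hb, hNcard]
    simp only [this]
    rw [Finset.prod_ite_mem, Finset.univ_inter, Finset.prod_const]
  rw [h1, Finset.sum_congr rfl h2]
  clear h1 h2 hNcard
  clear_value k N
  clear hN N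
  -- now: ∑ B ∈ Finset.univ.filter (fun B : Finset (Fin μ) => B.card ≤ r), k ^ B.card = ∑ i ∈ range (r+1), choose μ i * k ^ i
  have ht2 : (Finset.univ.filter (fun B : Finset (Fin μ) => B.card ≤ r)) = (Finset.range (r + 1)).biUnion fun i => Finset.powersetCard i Finset.univ := by
    ext B
    simp only [Finset.mem_filter, Finset.mem_univ, true_and, Finset.mem_biUnion,
      Finset.mem_range, Finset.mem_powersetCard_univ]
    constructor
    · intro h; exact ⟨B.card, Nat.lt_succ_of_le h, rfl⟩
    · intro h
      obtain ⟨i, hi, hBi⟩ := h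
      omega
  rw [ht2, Finset.sum_biUnion]
  · apply Finset.sum_congr rfl
    intro i _
    have hc : ∀ B ∈ Finset.powersetCard i (Finset.univ : Finset (Fin μ)), k ^ B.card = k ^ i := by
      intro B hB; rw [Finset.mem_powersetCard_univ] at hB; rw [hB]
    calc ∑ B ∈ Finset.powersetCard i (Finset.univ : Finset (Fin μ)), k ^ B.card
        = ∑ _B ∈ Finset.powersetCard i (Finset.univ : Finset (Fin μ)), k ^ i :=
          Finset.sum_congr rfl hc
      _ = μ.choose i * k ^ i := by
          rw [Finset.sum_const, Finset.card_powersetCard, Finset.card_univ,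
            Fintype.card_fin, smul_eq_mul]
  · intro x _ y _ hxy
    apply Finset.disjoint_left.mpr
    intro B hx hy
    rw [Finset.mem_powersetCard_univ] at hx hy
    exact hxy (hx ▸ hy)

lemma mem_allowedFS {r' m' r μ : ℕ} {f : Fin μ → Finset (Fin m')} :
    f ∈ allowedFS r' m' r μ ↔
      (Finset.univ.filter fun b => f b ≠ ∅).card ≤ r ∧ ∀ b, (f b).card ≤ r' := by
  simp [allowedFS]


/-- the bilinear map version of `odot` -/
def odotL (m' μ : ℕ) :
    Vsp m' μ →ₗ[ZMod 2] ((Fin m' → ZMod 2) → ZMod 2) →ₗ[ZMod 2] Vsp m' (μ + 1) :=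
  LinearMap.mk₂ (ZMod 2) odot
    (fun c₁ c₂ v => by funext x; simp [odot, add_mul])
    (fun a c v => by funext x; simp [odot, smul_eq_mul]; ring)
    (fun c v₁ v₂ => by funext x; simp [odot, mul_add])
    (fun a c v => by funext x; simp [odot, smul_eq_mul]; ring)

lemma odot_monF {m' μ : ℕ} (f : Fin μ → Finset (Fin m')) (T : Finset (Fin m')) :
    odot (monF f) (fun x => ∏ i ∈ T, x i) = monF (Fin.snoc f T) := by
  funext x
  simp only [odot, monF, Fin.prod_univ_castSucc, Fin.snoc_castSucc, Fin.snoc_last]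

lemma supp_snoc_card {m' μ : ℕ} (f : Fin μ → Finset (Fin m')) (T : Finset (Fin m')) :
    (Finset.univ.filter fun b => (Fin.snoc f T : Fin (μ+1) → Finset (Fin m')) b ≠ ∅).card =
      (Finset.univ.filter fun b => f b ≠ ∅).card + (if T = ∅ then 0 else 1) := by
  simp only [Finset.card_filter]
  rw [Fin.sum_univ_castSucc]
  simp only [Fin.snoc_castSucc, Fin.snoc_last]
  congr 1
  by_cases hT : T = ∅ <;> simp [hT]

lemma monF_allowed_zero {r' m' μ : ℕ} :
    monF '' ↑(allowedFS r' m' 0 μ) = {c : Vsp m' μ | c = fun _ => 1} := by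
  ext c
  constructor
  · rintro ⟨f, hf, rfl⟩
    rw [Finset.mem_coe, mem_allowedFS] at hf
    have h0 : ∀ b, f b = ∅ := by
      intro b
      by_contra hb
      have : b ∈ Finset.univ.filter fun b => f b ≠ ∅ := by simp [hb]
      have := Finset.card_pos.mpr ⟨b, this⟩
      omega
    have : f = fun _ => (∅ : Finset (Fin m')) := funext h0
    subst this
    show monF (fun _ => ∅) = fun _ => (1 : ZMod 2)
    funext x
    simp [monF]
  · rintro rfl
    refine ⟨fun _ => ∅, ?_, ?_⟩
    · rw [Finset.mem_coe, mem_allowedFS]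
      exact ⟨by simp, by simp⟩
    · funext x
      simp [monF]

lemma span_odot_one {m' μ : ℕ} (s : Set (Vsp m' μ)) :
    Submodule.span (ZMod 2)
        {w | ∃ c ∈ Submodule.span (ZMod 2) s, w = odot c (fun _ => 1)} =
      Submodule.span (ZMod 2) ((fun c => odot c (fun _ => 1)) '' s) := by
  have h1 : {w | ∃ c ∈ Submodule.span (ZMod 2) s, w = odot c (fun _ => 1)} =
      ⇑((odotL m' μ).flip (fun _ => 1)) '' ↑(Submodule.span (ZMod 2) s) := by
    ext w
    simp only [Set.mem_setOf_eq, Set.mem_image, SetLike.mem_coe, LinearMap.flip_apply,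
      odotL, LinearMap.mk₂_apply]
    constructor
    · rintro ⟨c, hc, rfl⟩; exact ⟨c, hc, rfl⟩
    · rintro ⟨c, hc, rfl⟩; exact ⟨c, hc, rfl⟩
  rw [h1, Submodule.span_image, Submodule.span_eq, Submodule.map_span]
  rfl

lemma span_odot_pair {m' μ : ℕ} (s : Set (Vsp m' μ))
    (t : Set ((Fin m' → ZMod 2) → ZMod 2)) :
    Submodule.span (ZMod 2)
        {w | ∃ c ∈ Submodule.span (ZMod 2) s, ∃ v ∈ Submodule.span (ZMod 2) t, w = odot c v} =
      Submodule.span (ZMod 2) (Set.image2 odot s t) := by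
  have h1 : {w | ∃ c ∈ Submodule.span (ZMod 2) s, ∃ v ∈ Submodule.span (ZMod 2) t, w = odot c v}
      = Set.image2 (fun c v => (odotL m' μ) c v) ↑(Submodule.span (ZMod 2) s)
        ↑(Submodule.span (ZMod 2) t) := by
    ext w
    simp only [Set.mem_setOf_eq, Set.mem_image2, SetLike.mem_coe, odotL, LinearMap.mk₂_apply]
    constructor
    · rintro ⟨c, hc, v, hv, rfl⟩; exact ⟨c, hc, v, hv, rfl⟩
    · rintro ⟨c, hc, v, hv, rfl⟩; exact ⟨c, hc, v, hv, rfl⟩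
  have h2 := Submodule.map₂_span_span (ZMod 2) (odotL m' μ) s t
  rw [Submodule.map₂_eq_span_image2] at h2
  rw [h1, h2]
  rfl

lemma snoc_init (g : Fin (μ+1) → Finset (Fin m')) (b : Fin μ) :
    Fin.init g b = g b.castSucc := rfl

lemma union_eq_allowed (r' m' s μ : ℕ) :
    ((fun c => odot c (fun _ => 1)) '' (monF '' ↑(allowedFS r' m' (s+1) (μ+1)))) ∪
      Set.image2 odot (monF '' ↑(allowedFS r' m' s (μ+1)))
        {c | ∃ S : Finset (Fin m'), S.card ≤ r' ∧ c = fun x => ∏ i ∈ S, x i} =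
    monF (m':=m') (μ:=μ+1+1) '' ↑(allowedFS r' m' (s+1) (μ+1+1)) := by
  apply Set.Subset.antisymm
  · rintro w hw
    rcases hw with ⟨c, ⟨f, hf, rfl⟩, rfl⟩ | ⟨c, ⟨f, hf, rfl⟩, v, ⟨T, hT, rfl⟩, rfl⟩
    · rw [Finset.mem_coe, mem_allowedFS] at hf
      have h1 : (fun _ : Fin m' → ZMod 2 => (1:ZMod 2)) =
          fun x : Fin m' → ZMod 2 => ∏ i ∈ (∅ : Finset (Fin m')), x i := by simp
      refine ⟨Fin.snoc f ∅, ?_, by rw [h1]; exact (odot_monF f ∅).symm⟩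
      rw [Finset.mem_coe, mem_allowedFS]
      constructor
      · rw [supp_snoc_card]
        simpa using hf.1
      · intro b
        refine Fin.lastCases ?_ ?_ b
        · simp [Fin.snoc_last]
        · intro i
          rw [Fin.snoc_castSucc]
          exact hf.2 i
    · rw [Finset.mem_coe, mem_allowedFS] at hf
      refine ⟨Fin.snoc f T, ?_, (odot_monF f T).symm⟩
      rw [Finset.mem_coe, mem_allowedFS]
      constructor
      · rw [supp_snoc_card]
        have : (if T = ∅ then 0 else 1) ≤ 1 := by split <;> omega
        omega
      · intro b
        refine Fin.lastCases ?_ ?_ b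
        · rw [Fin.snoc_last]; exact hT
        · intro i
          rw [Fin.snoc_castSucc]
          exact hf.2 i
  · rintro w ⟨g, hg, rfl⟩
    rw [Finset.mem_coe, mem_allowedFS] at hg
    have hgs : g = Fin.snoc (Fin.init g) (g (Fin.last (μ+1))) := (Fin.snoc_init_self g).symm
    have hcard : (Finset.univ.filter fun b => Fin.init g b ≠ ∅).card +
        (if g (Fin.last (μ+1)) = ∅ then 0 else 1) ≤ s + 1 := by
      rw [← supp_snoc_card]
      calc _ = (Finset.univ.filter fun b => g b ≠ ∅).card := by rw [← hgs]
        _ ≤ s + 1 := hg.1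
    by_cases hT : g (Fin.last (μ+1)) = ∅
    · left
      refine ⟨monF (Fin.init g), ⟨Fin.init g, ?_, rfl⟩, ?_⟩
      · rw [Finset.mem_coe, mem_allowedFS]
        refine ⟨by rw [hT] at hcard; simpa using hcard, fun b => hg.2 b.castSucc⟩
      · show odot (monF (Fin.init g)) (fun _ => 1) = monF g
        have h1 : (fun _ : Fin m' → ZMod 2 => (1:ZMod 2)) =
            fun x : Fin m' → ZMod 2 => ∏ i ∈ (∅ : Finset (Fin m')), x i := by simp
        rw [h1, odot_monF, ← hT, ← hgs]
    · right
      refine ⟨monF (Fin.init g), ⟨Fin.init g, ?_, rfl⟩,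
        (fun x => ∏ i ∈ g (Fin.last (μ+1)), x i),
        ⟨g (Fin.last (μ+1)), hg.2 _, rfl⟩, by rw [odot_monF, ← hgs]⟩
      rw [Finset.mem_coe, mem_allowedFS]
      refine ⟨?_, fun b => hg.2 b.castSucc⟩
      rw [if_neg hT] at hcard
      omega

lemma image2_eq_allowed_top (r' m' μ : ℕ) :
    Set.image2 odot (monF '' ↑(allowedFS r' m' (μ+1) (μ+1)))
        {c | ∃ S : Finset (Fin m'), S.card ≤ r' ∧ c = fun x => ∏ i ∈ S, x i} =
    monF (m':=m') (μ:=μ+1+1) '' ↑(allowedFS r' m' (μ+1+1) (μ+1+1)) := by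
  apply Set.Subset.antisymm
  · rintro w ⟨c, ⟨f, hf, rfl⟩, v, ⟨T, hT, rfl⟩, rfl⟩
    rw [Finset.mem_coe, mem_allowedFS] at hf
    refine ⟨Fin.snoc f T, ?_, (odot_monF f T).symm⟩
    rw [Finset.mem_coe, mem_allowedFS]
    constructor
    · rw [supp_snoc_card]
      have : (if T = ∅ then 0 else 1) ≤ 1 := by split <;> omega
      omega
    · intro b
      refine Fin.lastCases ?_ ?_ b
      · rw [Fin.snoc_last]; exact hT
      · intro i
        rw [Fin.snoc_castSucc]
        exact hf.2 i
  · rintro w ⟨g, hg, rfl⟩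
    rw [Finset.mem_coe, mem_allowedFS] at hg
    have hgs : g = Fin.snoc (Fin.init g) (g (Fin.last (μ+1))) := (Fin.snoc_init_self g).symm
    refine ⟨monF (Fin.init g), ⟨Fin.init g, ?_, rfl⟩,
      (fun x => ∏ i ∈ g (Fin.last (μ+1)), x i),
      ⟨g (Fin.last (μ+1)), hg.2 _, rfl⟩, by rw [odot_monF, ← hgs]⟩
    rw [Finset.mem_coe, mem_allowedFS]
    refine ⟨?_, fun b => hg.2 b.castSucc⟩
    calc (Finset.univ.filter fun b => Fin.init g b ≠ ∅).card
        ≤ (Finset.univ : Finset (Fin (μ+1))).card := Finset.card_filter_le _ _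
      _ = μ + 1 := by simp

lemma rm1_eq (r' m' t : ℕ) :
    {c : Vsp m' 1 | ∃ S : Finset (Fin m'), S.card ≤ r' ∧ c = fun x => ∏ i ∈ S, x 0 i} =
      monF (m':=m') (μ:=1) '' ↑(allowedFS r' m' (t+1) 1) := by
  ext c
  constructor
  · rintro ⟨S, hS, rfl⟩
    refine ⟨fun _ => S, ?_, ?_⟩
    · rw [Finset.mem_coe, mem_allowedFS]
      refine ⟨?_, fun _ => hS⟩
      calc (Finset.univ.filter fun b : Fin 1 => (fun _ => S) b ≠ ∅).card
          ≤ (Finset.univ : Finset (Fin 1)).card := Finset.card_filter_le _ _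
        _ = 1 := by simp
        _ ≤ t + 1 := by omega
    · funext x
      show (∏ b : Fin 1, ∏ i ∈ S, x b i) = ∏ i ∈ S, x 0 i
      exact Fin.prod_univ_one _
  · rintro ⟨f, hf, rfl⟩
    rw [Finset.mem_coe, mem_allowedFS] at hf
    refine ⟨f 0, hf.2 0, ?_⟩
    funext x
    show (∏ b : Fin 1, ∏ i ∈ f b, x b i) = ∏ i ∈ f 0, x 0 i
    exact Fin.prod_univ_one _

lemma Dcode_eq_span (r' m' : ℕ) (μ : ℕ) : ∀ r, r ≤ μ + 1 →
    Dcode r' m' r (μ + 1) =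
      Submodule.span (ZMod 2) (monF '' ↑(allowedFS r' m' r (μ + 1))) := by
  induction μ with
  | zero =>
    intro r _
    cases r with
    | zero =>
      rw [Dcode]
      congr 1
      exact monF_allowed_zero.symm
    | succ t =>
      rw [Dcode]
      congr 1
      exact rm1_eq r' m' t
  | succ ν ih =>
    intro r hr
    cases r with
    | zero =>
      rw [Dcode]
      congr 1
      exact monF_allowed_zero.symm
    | succ s =>
      rw [Dcode]
      by_cases hlt : s + 1 < ν + 1 + 1
      · rw [if_pos hlt]
        rw [ih (s+1) (by omega), ih s (by omega)]
        unfold RMbase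
        rw [Submodule.span_union, span_odot_one, span_odot_pair, ← Submodule.span_union,
          union_eq_allowed]
      · rw [if_neg hlt]
        have hseq : s + 1 = ν + 1 + 1 := by omega
        rw [ih (ν+1) le_rfl]
        unfold RMbase
        rw [span_odot_pair, image2_eq_allowed_top, hseq]

/-- for `0 ≤ r ≤ m`, the dimension of `D(r,m)` with base code `RM(r',m')`
equals `Σ_{i=0}^{r} (m choose i) · k̄^i` where `k̄ = Σ_{j=1}^{r'} (m' choose j)`. -/
theorem stmt_18 (m m' r' : ℕ) (hm : 1 ≤ m) (hm' : 1 ≤ m') (hr'1 : 1 ≤ r') (hr'2 : r' ≤ m')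
    (r : ℕ) (hr : r ≤ m) :
    Module.finrank (ZMod 2) (Dcode r' m' r m) =
      ∑ i ∈ Finset.range (r + 1),
        m.choose i * (∑ j ∈ Finset.Icc 1 r', m'.choose j) ^ i := by
  obtain ⟨ν, rfl⟩ : ∃ ν, m = ν + 1 := ⟨m - 1, by omega⟩
  rw [Dcode_eq_span r' m' ν r (by omega)]
  have hli : LinearIndependent (ZMod 2)
      (fun f : {f // f ∈ allowedFS r' m' r (ν+1)} => monF f.val) :=
    monF_linearIndependent.comp Subtype.val Subtype.val_injective
  have hrange : Set.range (fun f : {f // f ∈ allowedFS r' m' r (ν+1)} => monF f.val) =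
      monF '' ↑(allowedFS r' m' r (ν+1)) := by
    rw [show (fun f : {f // f ∈ allowedFS r' m' r (ν+1)} => monF f.val)
        = monF ∘ Subtype.val from rfl, Set.range_comp, Subtype.range_coe]
  rw [← hrange, finrank_span_eq_card hli, Fintype.card_coe, card_allowedFS]
end
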